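/- Let d ≥ 2 and ℓ > 0 with t_0 = ℓ√((d+1)/(2d)) and r = ℓ√((d-1)/(2d)). Suppose u = C + t_i·w and v = C - t_j·w with t_i, t_j ≥ t_0 for a unit vector w, and X_1 satisfies ‖X_1 - C‖ = r with X_1 - C orthogonal to w. Then ‖u - v‖ ≥ max(‖u - X_1‖, ‖v - X_1‖). -/

import Mathlib

theorem stmt_14 {V : Type*} [NormedAddCommGroup V] [InnerProductSpace ℝ V]
    (d : ℕ) (hd : 2 ≤ d) (ℓ : ℝ) (hℓ : 0 < ℓ)
    (t0 r : ℝ) (ht0 : t0 = ℓ * Real.sqrt ((d + 1) / (2*d)))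
    (hr : r = ℓ * Real.sqrt (((d:ℝ) - 1) / (2*d)))
    (C X1 u v : V) (w : V) (hw : ‖w‖ = 1)
    (horth : inner ℝ (X1 - C) w = (0:ℝ)) (hX1 : ‖X1 - C‖ = r)
    (ti tj : ℝ) (hti : t0 ≤ ti) (htj : t0 ≤ tj)
    (hu : u = C + ti • w) (hv : v = C - tj • w) :
    ‖u - v‖ ≥ max ‖u - X1‖ ‖v - X1‖ := by
  have hdpos : (0:ℝ) < d := by positivity
  have hfrac1 : (0:ℝ) ≤ ((d:ℝ) + 1) / (2*d) := by positivity
  have hfrac2 : (0:ℝ) ≤ ((d:ℝ) - 1) / (2*d) := by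
    apply div_nonneg _ (by positivity)
    have : (1:ℝ) ≤ d := by exact_mod_cast Nat.one_le_of_lt hd
    linarith
  have ht0sq : t0^2 = ℓ^2 * (((d:ℝ) + 1) / (2*d)) := by
    rw [ht0, mul_pow, Real.sq_sqrt hfrac1]
  have hrsq : r^2 = ℓ^2 * (((d:ℝ) - 1) / (2*d)) := by
    rw [hr, mul_pow, Real.sq_sqrt hfrac2]
  have ht0pos : 0 < t0 := by
    rw [ht0]
    have : (0:ℝ) < ((d:ℝ) + 1) / (2*d) := by positivity
    positivity
  have htipos : 0 < ti := lt_of_lt_of_le ht0pos hti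
  have htjpos : 0 < tj := lt_of_lt_of_le ht0pos htj
  -- key inequality: r^2 ≤ 3 * t0^2
  have hkey : r^2 ≤ 3 * t0^2 := by
    rw [hrsq, ht0sq]
    have h1 : ((d:ℝ) - 1) / (2*d) ≤ 3 * (((d:ℝ) + 1) / (2*d)) := by
      rw [div_le_iff₀ (by positivity)]
      field_simp
      linarith
    nlinarith [sq_nonneg ℓ]
  have huv : ‖u - v‖ = ti + tj := by
    have : u - v = (ti + tj) • w := by
      rw [hu, hv]; module
    rw [this, norm_smul, hw, mul_one, Real.norm_eq_abs, abs_of_pos (by linarith)]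
  have hwinner : inner ℝ w (X1 - C) = (0:ℝ) := by
    rw [real_inner_comm]; exact horth
  have hgen : ∀ t : ℝ, ‖(t • w) - (X1 - C)‖^2 = t^2 + r^2 := by
    intro t
    rw [norm_sub_sq_real, inner_smul_left, hwinner, norm_smul, hX1, hw,
      Real.norm_eq_abs]
    ring_nf
    rw [sq_abs]
    ring
  have huX : ‖u - X1‖^2 = ti^2 + r^2 := by
    have : u - X1 = (ti • w) - (X1 - C) := by rw [hu]; abel
    rw [this, hgen]
  have hvX : ‖v - X1‖^2 = tj^2 + r^2 := by
    have : v - X1 = ((-tj) • w) - (X1 - C) := by rw [hv]; module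
    rw [this, hgen]; ring
  rw [ge_iff_le, max_le_iff]
  constructor
  · apply le_of_pow_le_pow_left₀ two_ne_zero (by rw [huv]; positivity)
    rw [huX, huv]
    nlinarith
  · apply le_of_pow_le_pow_left₀ two_ne_zero (by rw [huv]; positivity)
    rw [hvX, huv]
    nlinarith
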